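/- Let G be a global amoeba of order n with degree sequence d_1 ≥ d_2 ≥ ... ≥ d_n and maximum degree Δ. Then the set of degrees {d_i : i ∈ [n]} equals [Δ] = {1,...,Δ} or {0} ∪ [Δ], and moreover d_i ≤ n + 1 − i for every i ∈ [n]. -/

import Mathlib

open SimpleGraph Equiv

/-- The labeled copy `G_σ`, with edges `v_{σ⁻¹ i} v_{σ⁻¹ j}` for edges `v_i v_j` of `G`. -/
def copyG {V : Type*} (G : SimpleGraph V) (σ : Equiv.Perm V) : SimpleGraph V where
  Adj a b := G.Adj (σ a) (σ b)
  symm := ⟨fun _ _ h => G.symm.symm _ _ h⟩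
  loopless := ⟨fun _ h => G.loopless.irrefl _ h⟩

/-- The graph `G - v_r v_s + v_k v_l`. -/
def replaceG {V : Type*} (G : SimpleGraph V) (r s k l : V) : SimpleGraph V :=
  SimpleGraph.fromEdgeSet ((G.edgeSet \ {s(r, s)}) ∪ {s(k, l)})

/-- The edge-replacement `rs → kl` is feasible: `v_r v_s ∈ E(G)`, `v_k v_l` is a non-edge or
`{k,l} = {r,s}`, and `G - v_r v_s + v_k v_l ≅ G`. -/
def IsFeasible {V : Type*} (G : SimpleGraph V) (r s k l : V) : Prop :=
  G.Adj r s ∧ (Gᶜ.Adj k l ∨ s(k, l) = s(r, s)) ∧ Nonempty (replaceG G r s k l ≃g G)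

/-- The permutations realizing feasible edge-replacements of `G`. -/
def feasiblePerms {V : Type*} (G : SimpleGraph V) : Set (Equiv.Perm V) :=
  {σ | ∃ r s k l, IsFeasible G r s k l ∧ copyG G σ = replaceG G r s k l}

/-- The group `S_G` generated by all permutations realizing feasible edge-replacements. -/
def ampGroup {V : Type*} (G : SimpleGraph V) : Subgroup (Equiv.Perm V) :=
  Subgroup.closure (feasiblePerms G)

/-- `G` is a local amoeba if `S_G` is the full symmetric group. -/
def LocalAmoeba {V : Type*} (G : SimpleGraph V) : Prop := ampGroup G = ⊤

/-- Disjoint union of two graphs. -/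
def sumGraph {V W : Type*} (H : SimpleGraph V) (H' : SimpleGraph W) : SimpleGraph (V ⊕ W) :=
  SimpleGraph.map (⟨Sum.inl, Sum.inl_injective⟩ : V ↪ V ⊕ W) H ⊔ SimpleGraph.map (⟨Sum.inr, Sum.inr_injective⟩ : W ↪ V ⊕ W) H'

/-- `G` together with `t` additional isolated vertices. -/
def addIsolated {V : Type*} (G : SimpleGraph V) (t : ℕ) : SimpleGraph (V ⊕ Fin t) :=
  sumGraph G (⊥ : SimpleGraph (Fin t))

/-- `G` is a global amoeba if `G ∪ tK₁` is a local amoeba for all sufficiently large `t`. -/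
def GlobalAmoeba {V : Type*} (G : SimpleGraph V) : Prop :=
  ∃ T : ℕ, ∀ t ≥ T, LocalAmoeba (addIsolated G t)

/-! ### Auxiliary material -/

namespace Stmt8Aux

/-- Degree measured by `Set.ncard` of the neighbor set (instance-free). -/
noncomputable def nd {W : Type*} (H : SimpleGraph W) (x : W) : ℕ := (H.neighborSet x).ncard

lemma nd_eq_degree {V : Type*} [Fintype V] (G : SimpleGraph V) [DecidableRel G.Adj] (v : V) :
    nd G v = G.degree v := by
  rw [nd, Set.ncard_eq_toFinset_card', Set.toFinset_card, G.card_neighborSet_eq_degree]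

lemma nd_copyG {W : Type*} (H : SimpleGraph W) (σ : Equiv.Perm W) (x : W) :
    nd (copyG H σ) x = nd H (σ x) := by
  have h : (copyG H σ).neighborSet x = ⇑σ.symm '' (H.neighborSet (σ x)) := by
    ext y
    simp only [SimpleGraph.mem_neighborSet, Set.mem_image]
    constructor
    · intro h; exact ⟨σ y, h, by simp⟩
    · rintro ⟨z, hz, rfl⟩
      show H.Adj (σ x) (σ (σ.symm z))
      simpa using hz
  rw [nd, h, Set.ncard_image_of_injective _ σ.symm.injective]
  rfl

lemma nd_le_replaceG {W : Type*} [Fintype W] (H : SimpleGraph W) {r s : W} (k l : W)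
    (hrs : r ≠ s) (x : W) :
    nd H x ≤ nd (replaceG H r s k l) x + 1 := by
  classical
  set w : W := if x = r then s else r with hw
  have hsub : H.neighborSet x ⊆ insert w ((replaceG H r s k l).neighborSet x) := by
    intro y hy
    have hadj : H.Adj x y := hy
    by_cases he : s(x, y) = s(r, s)
    · rw [Sym2.eq_iff] at he
      rcases he with ⟨hx, hy'⟩ | ⟨hx, hy'⟩
      · have : w = y := by rw [hw, hx, hy', if_pos rfl]
        rw [← this]; exact Set.mem_insert _ _
      · have : w = y := by rw [hw, hx, hy', if_neg (Ne.symm hrs)]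
        rw [← this]; exact Set.mem_insert _ _
    · refine Set.mem_insert_of_mem _ ?_
      show (replaceG H r s k l).Adj x y
      rw [replaceG, SimpleGraph.fromEdgeSet_adj]
      exact ⟨Or.inl ⟨H.mem_edgeSet.mpr hadj, he⟩, hadj.ne⟩
  calc nd H x ≤ (insert w ((replaceG H r s k l).neighborSet x)).ncard :=
        Set.ncard_le_ncard hsub (Set.toFinite _)
    _ ≤ _ := Set.ncard_insert_le _ _

lemma addIsolated_adj {V : Type*} (G : SimpleGraph V) (t : ℕ) (a b : V ⊕ Fin t) :
    (addIsolated G t).Adj a b ↔ ∃ u v, G.Adj u v ∧ Sum.inl u = a ∧ Sum.inl v = b := by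
  simp [addIsolated, sumGraph, SimpleGraph.map_adj']
  intro u v h hu hv hab
  subst hu hv
  exact h.ne (Sum.inl_injective hab)

lemma nd_addIsolated_inl {V : Type*} [Fintype V] (G : SimpleGraph V) [DecidableRel G.Adj]
    (t : ℕ) (v : V) :
    nd (addIsolated G t) (Sum.inl v) = G.degree v := by
  have h : (addIsolated G t).neighborSet (Sum.inl v) = Sum.inl '' G.neighborSet v := by
    ext y
    simp only [SimpleGraph.mem_neighborSet, addIsolated_adj, Set.mem_image]
    constructor
    · rintro ⟨u, u', h, hu, rfl⟩
      obtain rfl : u = v := Sum.inl_injective hu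
      exact ⟨u', h, rfl⟩
    · rintro ⟨u', h, rfl⟩
      exact ⟨v, u', h, rfl, rfl⟩
  rw [nd, h, Set.ncard_image_of_injective _ Sum.inl_injective, ← nd_eq_degree]
  rfl

lemma nd_addIsolated_inr {V : Type*} (G : SimpleGraph V) (t : ℕ) (j : Fin t) :
    nd (addIsolated G t) (Sum.inr j) = 0 := by
  have h : (addIsolated G t).neighborSet (Sum.inr j) = ∅ := by
    ext y
    simp only [SimpleGraph.mem_neighborSet, addIsolated_adj, Set.mem_empty_iff_false, iff_false]
    rintro ⟨u, u', _, hu, _⟩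
    exact absurd hu (by simp)
  rw [nd, h, Set.ncard_empty]

/-- Key lemma: a global amoeba attains every degree `d` with `1 ≤ d ≤ Δ`. -/
lemma key {V : Type*} [Fintype V] [Nonempty V] (G : SimpleGraph V) [DecidableRel G.Adj]
    (hG : GlobalAmoeba G) {d : ℕ} (hd1 : 1 ≤ d) (hdΔ : d ≤ G.maxDegree) :
    ∃ v : V, G.degree v = d := by
  classical
  by_contra hno
  push_neg at hno
  obtain ⟨T, hT⟩ := hG
  have hLA : LocalAmoeba (addIsolated G (T + 1)) := hT (T + 1) (Nat.le_succ T)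
  set H := addIsolated G (T + 1) with hH
  have hnd : ∀ x : V ⊕ Fin (T + 1), nd H x ≠ d := by
    rintro (v | j)
    · rw [hH, nd_addIsolated_inl]; exact hno v
    · rw [hH, nd_addIsolated_inr]; omega
  set A : Set (V ⊕ Fin (T + 1)) := {x | d + 1 ≤ nd H x} with hA
  have hstab : ∀ σ ∈ feasiblePerms H, ⇑σ '' A = A := by
    intro σ hσ
    obtain ⟨r, s, k, l, ⟨hadj, -, -⟩, hcopy⟩ := hσ
    have hsubset : ⇑σ '' A ⊆ A := by
      rintro - ⟨x, hx, rfl⟩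
      have h1 : nd H x ≤ nd (replaceG H r s k l) x + 1 := nd_le_replaceG H k l hadj.ne x
      rw [← hcopy, nd_copyG] at h1
      have h2 := hnd (σ x)
      have hx' : d + 1 ≤ nd H x := hx
      show d + 1 ≤ nd H (σ x)
      omega
    exact Set.eq_of_subset_of_ncard_le hsubset
      (by rw [Set.ncard_image_of_injective _ σ.injective]) (Set.toFinite _)
  set stab : Subgroup (Equiv.Perm (V ⊕ Fin (T + 1))) :=
    { carrier := {σ | ⇑σ '' A = A}
      one_mem' := by
        show ⇑(1 : Equiv.Perm (V ⊕ Fin (T + 1))) '' A = A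
        simp
      mul_mem' := by
        intro σ τ hσ hτ
        have hσ' : ⇑σ '' A = A := hσ
        have hτ' : ⇑τ '' A = A := hτ
        show ⇑(σ * τ) '' A = A
        have hc : ⇑(σ * τ) = ⇑σ ∘ ⇑τ := rfl
        rw [hc, Set.image_comp, hτ', hσ']
      inv_mem' := by
        intro σ hσ
        have hσ' : ⇑σ '' A = A := hσ
        show ⇑σ⁻¹ '' A = A
        conv_lhs => rw [← hσ']
        rw [← Set.image_comp]
        have hc : ⇑σ⁻¹ ∘ ⇑σ = id := by
          funext y; simp
        rw [hc, Set.image_id] } with hstabdef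
  have hle : ampGroup H ≤ stab := (Subgroup.closure_le stab).mpr hstab
  have hall : ∀ σ : Equiv.Perm (V ⊕ Fin (T + 1)), ⇑σ '' A = A := by
    intro σ
    have : σ ∈ ampGroup H := by rw [hLA]; trivial
    exact hle this
  obtain ⟨v₀, hv₀⟩ := G.exists_maximal_degree_vertex
  have ha : (Sum.inl v₀ : V ⊕ Fin (T + 1)) ∈ A := by
    show d + 1 ≤ nd H (Sum.inl v₀)
    rw [hH, nd_addIsolated_inl]
    have h1 := hno v₀
    omega
  have hb : (Sum.inr ⟨0, Nat.succ_pos T⟩ : V ⊕ Fin (T + 1)) ∉ A := by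
    show ¬ d + 1 ≤ nd H (Sum.inr ⟨0, Nat.succ_pos T⟩)
    rw [hH, nd_addIsolated_inr]; omega
  apply hb
  have hsw := hall (Equiv.swap (Sum.inl v₀) (Sum.inr ⟨0, Nat.succ_pos T⟩))
  rw [← hsw]
  exact ⟨_, ha, Equiv.swap_apply_left _ _⟩

end Stmt8Aux

open Stmt8Aux in
theorem stmt8 {V : Type*} [Fintype V] [Nonempty V] (G : SimpleGraph V) [DecidableRel G.Adj]
    (hG : GlobalAmoeba G) :
    ({d : ℕ | ∃ v : V, G.degree v = d} = Set.Icc 1 G.maxDegree ∨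
      {d : ℕ | ∃ v : V, G.degree v = d} = insert 0 (Set.Icc 1 G.maxDegree)) ∧
    ∀ e : Fin (Fintype.card V) ≃ V,
      (∀ i j : Fin (Fintype.card V), i ≤ j → G.degree (e j) ≤ G.degree (e i)) →
      ∀ i : Fin (Fintype.card V), G.degree (e i) ≤ Fintype.card V + 1 - (i.val + 1) := by
  classical
  constructor
  · by_cases h0 : ∃ v : V, G.degree v = 0
    · right
      ext d
      simp only [Set.mem_setOf_eq, Set.mem_insert_iff, Set.mem_Icc]
      constructor
      · rintro ⟨v, rfl⟩
        by_cases hv : G.degree v = 0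
        · exact Or.inl hv
        · exact Or.inr ⟨Nat.one_le_iff_ne_zero.mpr hv, G.degree_le_maxDegree v⟩
      · rintro (rfl | ⟨h1, h2⟩)
        · exact h0
        · exact key G hG h1 h2
    · left
      ext d
      simp only [Set.mem_setOf_eq, Set.mem_Icc]
      constructor
      · rintro ⟨v, rfl⟩
        exact ⟨Nat.one_le_iff_ne_zero.mpr (fun h => h0 ⟨v, h⟩), G.degree_le_maxDegree v⟩
      · rintro ⟨h1, h2⟩
        exact key G hG h1 h2
  · intro e hsort i
    set k := G.degree (e i) with hk
    rcases Nat.eq_zero_or_pos k with hk0 | hk1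
    · omega
    · have hkΔ : k ≤ G.maxDegree := G.degree_le_maxDegree _
      let f : ℕ → V := fun m =>
        if h : ∃ v, G.degree v = m then h.choose else Classical.arbitrary V
      have hf : ∀ m, 1 ≤ m → m ≤ k - 1 → G.degree (f m) = m := by
        intro m h1 h2
        have hex : ∃ v, G.degree v = m := key G hG h1 (by omega)
        simp only [f]
        convert hex.choose_spec using 2
        exact dif_pos hex
      set F1 : Finset V := (Finset.Iic i).image e with hF1
      set F2 : Finset V := (Finset.Icc 1 (k - 1)).image f with hF2
      have hF1card : F1.card = i.val + 1 := by
        rw [hF1, Finset.card_image_of_injective _ e.injective, Fin.card_Iic]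
      have hF2card : F2.card = k - 1 := by
        rw [hF2, Finset.card_image_of_injOn, Nat.card_Icc]
        · omega
        · intro a ha b hb hab
          simp only [Finset.coe_Icc, Set.mem_Icc] at ha hb
          rw [← hf a ha.1 ha.2, ← hf b hb.1 hb.2, hab]
      have hdisj : Disjoint F1 F2 := by
        rw [Finset.disjoint_left]
        intro v hv1 hv2
        simp only [hF1, Finset.mem_image, Finset.mem_Iic] at hv1
        simp only [hF2, Finset.mem_image, Finset.mem_Icc] at hv2
        obtain ⟨j, hj, rfl⟩ := hv1
        obtain ⟨m, hm, hfm⟩ := hv2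
        have h1 : k ≤ G.degree (e j) := hsort j i hj
        have h2 : G.degree (e j) = m := by rw [← hfm, hf m hm.1 hm.2]
        omega
      have hcard : F1.card + F2.card ≤ Fintype.card V := by
        rw [← Finset.card_union_of_disjoint hdisj]
        exact le_trans (Finset.card_le_univ _) (le_of_eq Finset.card_univ)
      have hi := i.isLt
      omega
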